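/- If G is a König–Egerváry graph, then the number of maximum independent sets of G is at most 2^{α(G)}, with equality if and only if G is the disjoint union of α(G) copies of K₂. -/

import Mathlib

open SimpleGraph
set_option linter.unusedSectionVars false
set_option maxHeartbeats 1000000

variable {V : Type*} [Fintype V] [DecidableEq V]

/-- A set of vertices is independent: no two of its vertices are adjacent. -/
def isIndep (G : SimpleGraph V) (S : Finset V) : Prop :=
  ∀ ⦃a⦄, a ∈ S → ∀ ⦃b⦄, b ∈ S → ¬ G.Adj a b

/-- The independence number `α(G)`. -/
noncomputable def indepNum (G : SimpleGraph V) : ℕ :=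
  sSup {n | ∃ S : Finset V, isIndep G S ∧ S.card = n}

/-- A maximum independent set: an independent set of size `α(G)`. -/
def isMaxIndep (G : SimpleGraph V) (S : Finset V) : Prop :=
  isIndep G S ∧ S.card = _root_.indepNum G

/-- `G` has two disjoint maximum independent sets. -/
def hasTwoDisjointMaxIndep (G : SimpleGraph V) : Prop :=
  ∃ S₁ S₂ : Finset V, isMaxIndep G S₁ ∧ isMaxIndep G S₂ ∧ Disjoint S₁ S₂

/-- A matching: a set of edges of `G`, pairwise sharing no vertex. -/
def isMatchingF (G : SimpleGraph V) (M : Finset (Sym2 V)) : Prop :=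
  (∀ e ∈ M, e ∈ G.edgeSet) ∧
  (∀ e ∈ M, ∀ f ∈ M, e ≠ f → ∀ v : V, v ∈ e → v ∉ f)

/-- The matching number `μ(G)`. -/
noncomputable def matchNum (G : SimpleGraph V) : ℕ :=
  sSup {n | ∃ M : Finset (Sym2 V), isMatchingF G M ∧ M.card = n}

/-- A shedding vertex: for every independent set `S` of `G − N[v]` there is a
neighbor `u` of `v` with `S ∪ {u}` independent. -/
def IsShedding (G : SimpleGraph V) (v : V) : Prop :=
  ∀ S : Finset V, isIndep G S → (∀ w ∈ S, w ≠ v ∧ ¬ G.Adj v w) →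
    ∃ u, G.Adj v u ∧ isIndep G (insert u S)

/-- A perfect matching of `G`: a matching covering every vertex. -/
def hasPerfectMatchingF (G : SimpleGraph V) : Prop :=
  ∃ M : Finset (Sym2 V), isMatchingF G M ∧ ∀ v : V, ∃ e ∈ M, v ∈ e

/-- The disjoint union of `k` copies of `K₂`. -/
def copiesK2 (k : ℕ) : SimpleGraph (Fin k × Fin 2) :=
  SimpleGraph.fromRel (fun p q => p.1 = q.1)

-- aux lemmas
lemma indep_bdd (G : SimpleGraph V) : BddAbove {n | ∃ S : Finset V, isIndep G S ∧ S.card = n} := by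
  refine ⟨Fintype.card V, ?_⟩
  rintro n ⟨S, -, rfl⟩
  exact S.card_le_univ

lemma indep_card_le {G : SimpleGraph V} {S : Finset V} (h : isIndep G S) : S.card ≤ _root_.indepNum G :=
  le_csSup (indep_bdd G) ⟨S, h, rfl⟩

lemma exists_max_indep (G : SimpleGraph V) :
    ∃ S : Finset V, isIndep G S ∧ S.card = _root_.indepNum G := by
  have h0 : (0:ℕ) ∈ {n | ∃ S : Finset V, isIndep G S ∧ S.card = n} :=
    ⟨∅, fun a ha => absurd ha (by simp), Finset.card_empty⟩
  exact Nat.sSup_mem ⟨0, h0⟩ (indep_bdd G)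

lemma match_bdd (G : SimpleGraph V) :
    BddAbove {n | ∃ M : Finset (Sym2 V), isMatchingF G M ∧ M.card = n} := by
  refine ⟨Fintype.card (Sym2 V), ?_⟩
  rintro n ⟨M, -, rfl⟩
  exact M.card_le_univ

lemma match_card_le {G : SimpleGraph V} {M : Finset (Sym2 V)} (h : isMatchingF G M) :
    M.card ≤ matchNum G :=
  le_csSup (match_bdd G) ⟨M, h, rfl⟩

lemma exists_max_match (G : SimpleGraph V) :
    ∃ M : Finset (Sym2 V), isMatchingF G M ∧ M.card = matchNum G := by
  have h0 : (0:ℕ) ∈ {n | ∃ M : Finset (Sym2 V), isMatchingF G M ∧ M.card = n} :=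
    ⟨∅, ⟨fun e he => absurd he (by simp), fun e he => absurd he (by simp)⟩, Finset.card_empty⟩
  exact Nat.sSup_mem ⟨0, h0⟩ (match_bdd G)

-- pair finset of an edge
noncomputable def pairF (e : Sym2 V) : Finset V := {e.out.1, e.out.2}

lemma mk_out' (e : Sym2 V) : s(e.out.1, e.out.2) = e := by
  rw [Sym2.mk, Prod.mk.eta, e.out_eq]

lemma mem_pairF {v : V} {e : Sym2 V} : v ∈ pairF e ↔ v ∈ e := by
  rw [pairF, Finset.mem_insert, Finset.mem_singleton, ← Sym2.mem_iff (b := e.out.1) (c := e.out.2),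
    mk_out' e]

lemma out_ne {G : SimpleGraph V} {e : Sym2 V} (he : e ∈ G.edgeSet) : e.out.1 ≠ e.out.2 := by
  intro h
  have hd : ¬ e.IsDiag := G.not_isDiag_of_mem_edgeSet he
  rw [← mk_out' e] at hd
  exact hd (Sym2.mk_isDiag_iff.2 h)

lemma card_pairF {G : SimpleGraph V} {e : Sym2 V} (he : e ∈ G.edgeSet) : (pairF e).card = 2 := by
  rw [pairF, Finset.card_insert_of_notMem (by simpa using out_ne he), Finset.card_singleton]

lemma pair_disj {G : SimpleGraph V} {M : Finset (Sym2 V)} (hM : isMatchingF G M)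
    {e f : Sym2 V} (he : e ∈ M) (hf : f ∈ M) (hef : e ≠ f) :
    Disjoint (pairF e) (pairF f) := by
  rw [Finset.disjoint_left]
  intro v hv hv'
  exact hM.2 e he f hf hef v (mem_pairF.1 hv) (mem_pairF.1 hv')

lemma card_covered {G : SimpleGraph V} {M : Finset (Sym2 V)} (hM : isMatchingF G M) :
    (M.biUnion pairF).card = 2 * M.card := by
  rw [Finset.card_biUnion (fun e he f hf hef => pair_disj hM he hf hef)]
  rw [Finset.sum_congr rfl (fun e he => card_pairF (hM.1 e he)), Finset.sum_const, smul_eq_mul,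
    mul_comm]

lemma two_mu_le {G : SimpleGraph V} {M : Finset (Sym2 V)} (hM : isMatchingF G M) :
    2 * M.card ≤ Fintype.card V := by
  rw [← card_covered hM]
  exact Finset.card_le_univ _

lemma pair_inter_le_one {G : SimpleGraph V} {M : Finset (Sym2 V)} (hM : isMatchingF G M)
    {S : Finset V} (hInd : isIndep G S) {e : Sym2 V} (he : e ∈ M) :
    (S ∩ pairF e).card ≤ 1 := by
  rw [Finset.card_le_one]
  intro a ha b hb
  rw [Finset.mem_inter] at ha hb
  by_contra hab
  have hadj : G.Adj a b := by
    have hes : e = s(a, b) := (Sym2.mem_and_mem_iff hab).1 ⟨mem_pairF.1 ha.2, mem_pairF.1 hb.2⟩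
    have := hM.1 e he
    rw [hes, SimpleGraph.mem_edgeSet] at this
    exact this
  exact hInd ha.1 hb.1 hadj

lemma all_eq_one {ι : Type*} {s : Finset ι} {f : ι → ℕ} (h1 : ∀ i ∈ s, f i ≤ 1)
    (h2 : s.card ≤ ∑ i ∈ s, f i) : ∀ i ∈ s, f i = 1 := by
  by_contra hc
  push_neg at hc
  obtain ⟨i0, hi0, hne⟩ := hc
  have hlt : ∑ i ∈ s, f i < ∑ i ∈ s, 1 := by
    refine Finset.sum_lt_sum h1 ⟨i0, hi0, ?_⟩
    have := h1 i0 hi0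
    omega
  rw [Finset.sum_const, smul_eq_mul, mul_one] at hlt
  omega

lemma mis_struct {G : SimpleGraph V} (hKE : _root_.indepNum G + matchNum G = Fintype.card V)
    {M : Finset (Sym2 V)} (hM : isMatchingF G M) (hMc : M.card = matchNum G)
    {S : Finset V} (hS : isMaxIndep G S) :
    (∀ v, (∀ e ∈ M, v ∉ e) → v ∈ S) ∧ (∀ e ∈ M, (S ∩ pairF e).card = 1) := by
  classical
  set C := M.biUnion pairF with hC
  have hCcard : C.card = 2 * M.card := card_covered hM
  have hAeq : S ∩ C = M.biUnion (fun e => S ∩ pairF e) := by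
    ext v
    simp only [hC, Finset.mem_inter, Finset.mem_biUnion]
    tauto
  have hAcard : (S ∩ C).card = ∑ e ∈ M, (S ∩ pairF e).card := by
    rw [hAeq]
    exact Finset.card_biUnion (fun e he f hf hef =>
      (pair_disj hM he hf hef).mono Finset.inter_subset_right Finset.inter_subset_right)
  have hsum_le : ∑ e ∈ M, (S ∩ pairF e).card ≤ M.card := by
    calc ∑ e ∈ M, (S ∩ pairF e).card ≤ ∑ _e ∈ M, 1 :=
        Finset.sum_le_sum (fun e he => pair_inter_le_one hM hS.1 he)
      _ = M.card := by rw [Finset.sum_const, smul_eq_mul, mul_one]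
  have hBsub : S \ C ⊆ Finset.univ \ C := Finset.sdiff_subset_sdiff (Finset.subset_univ S) le_rfl
  have hBle : (S \ C).card ≤ Fintype.card V - 2 * M.card := by
    have := Finset.card_le_card hBsub
    rwa [Finset.card_sdiff_of_subset (Finset.subset_univ C), Finset.card_univ, hCcard] at this
  have hsplit : (S ∩ C).card + (S \ C).card = S.card := Finset.card_inter_add_card_sdiff S C
  have h2mu : 2 * M.card ≤ Fintype.card V := two_mu_le hM
  have hScard : S.card = _root_.indepNum G := hS.2
  have hAc : (S ∩ C).card = M.card := by omega
  have hBc : (S \ C).card = Fintype.card V - 2 * M.card := by omega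
  constructor
  · intro v hv
    have hBeq : S \ C = Finset.univ \ C := by
      refine Finset.eq_of_subset_of_card_le hBsub ?_
      rw [Finset.card_sdiff_of_subset (Finset.subset_univ C), Finset.card_univ, hCcard, hBc]
    have hvC : v ∉ C := by
      simp only [hC, Finset.mem_biUnion]
      rintro ⟨e, he, hve⟩
      exact hv e he (mem_pairF.1 hve)
    have : v ∈ Finset.univ \ C := Finset.mem_sdiff.2 ⟨Finset.mem_univ v, hvC⟩
    rw [← hBeq] at this
    exact (Finset.mem_sdiff.1 this).1
  · exact all_eq_one (fun e he => pair_inter_le_one hM hS.1 he) (by omega)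

lemma inter_pair_one {S : Finset V} {e : Sym2 V} (hne : e.out.1 ≠ e.out.2)
    (h : (S ∩ pairF e).card = 1) :
    (e.out.1 ∈ S ∧ e.out.2 ∉ S) ∨ (e.out.1 ∉ S ∧ e.out.2 ∈ S) := by
  have hm1 : e.out.1 ∈ pairF e := by simp [pairF]
  have hm2 : e.out.2 ∈ pairF e := by simp [pairF]
  by_cases h1 : e.out.1 ∈ S <;> by_cases h2 : e.out.2 ∈ S
  · exfalso
    have : ({e.out.1, e.out.2} : Finset V) ⊆ S ∩ pairF e := by
      intro x hx
      rcases Finset.mem_insert.1 hx with rfl | hx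
      · exact Finset.mem_inter.2 ⟨h1, hm1⟩
      · rw [Finset.mem_singleton] at hx; subst hx; exact Finset.mem_inter.2 ⟨h2, hm2⟩
    have hcard := Finset.card_le_card this
    rw [Finset.card_insert_of_notMem (by simpa using hne), Finset.card_singleton, h] at hcard
    omega
  · exact Or.inl ⟨h1, h2⟩
  · exact Or.inr ⟨h1, h2⟩
  · exfalso
    have : S ∩ pairF e = ∅ := by
      rw [Finset.eq_empty_iff_forall_notMem]
      intro x hx
      rw [Finset.mem_inter, mem_pairF, ← mk_out' e, Sym2.mem_iff] at hx
      rcases hx.2 with rfl | rfl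
      · exact h1 hx.1
      · exact h2 hx.1
    rw [this] at h
    simp at h

/-- The encoding of a maximum independent set by the filter of matching edges
whose `out.1` endpoint lies in the set. -/
noncomputable def encM (M : Finset (Sym2 V)) (S : Finset V) : Finset (Sym2 V) :=
  M.filter (fun e => e.out.1 ∈ S)

lemma enc_injOn {G : SimpleGraph V} (hKE : _root_.indepNum G + matchNum G = Fintype.card V)
    {M : Finset (Sym2 V)} (hM : isMatchingF G M) (hMc : M.card = matchNum G) :
    Set.InjOn (encM M) {S : Finset V | isMaxIndep G S} := by
  intro S₁ hS₁ S₂ hS₂ heq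
  have h₁ := mis_struct hKE hM hMc hS₁
  have h₂ := mis_struct hKE hM hMc hS₂
  ext v
  by_cases hc : ∃ e ∈ M, v ∈ e
  · obtain ⟨e, heM, hve⟩ := hc
    have hne : e.out.1 ≠ e.out.2 := out_ne (hM.1 e heM)
    have hone₁ := inter_pair_one hne (h₁.2 e heM)
    have hone₂ := inter_pair_one hne (h₂.2 e heM)
    have hmem : e ∈ encM M S₁ ↔ e ∈ encM M S₂ := by rw [heq]
    simp only [encM, Finset.mem_filter, heM, true_and] at hmem
    rw [← mk_out' e, Sym2.mem_iff] at hve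
    rcases hve with rfl | rfl
    · tauto
    · tauto
  · push_neg at hc
    exact iff_of_true (h₁.1 v hc) (h₂.1 v hc)

lemma mu_le_alpha {G : SimpleGraph V} (hKE : _root_.indepNum G + matchNum G = Fintype.card V)
    {M : Finset (Sym2 V)} (hM : isMatchingF G M) (hMc : M.card = matchNum G) :
    matchNum G ≤ _root_.indepNum G := by
  have := two_mu_le hM
  omega

lemma mis_ncard_le {G : SimpleGraph V} (hKE : _root_.indepNum G + matchNum G = Fintype.card V)
    {M : Finset (Sym2 V)} (hM : isMatchingF G M) (hMc : M.card = matchNum G) :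
    {S : Finset V | isMaxIndep G S}.ncard ≤ 2 ^ M.card := by
  have hmaps : ∀ S ∈ {S : Finset V | isMaxIndep G S}, encM M S ∈ (M.powerset : Set (Finset (Sym2 V))) := by
    intro S _
    simp only [Finset.coe_powerset, Set.mem_preimage, Set.mem_powerset_iff, Finset.coe_subset]
    exact Finset.filter_subset _ _
  have := Set.ncard_le_ncard_of_injOn (encM M) hmaps (enc_injOn hKE hM hMc)
    (M.powerset.finite_toSet)
  rwa [Set.ncard_coe_finset, Finset.card_powerset] at this

lemma copiesK2_adj {k : ℕ} {p q : Fin k × Fin 2} :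
    (copiesK2 k).Adj p q ↔ p ≠ q ∧ p.1 = q.1 := by
  rw [copiesK2, SimpleGraph.fromRel_adj]
  tauto

lemma fib_card_le {k : ℕ} {S : Finset (Fin k × Fin 2)} (h : isIndep (copiesK2 k) S)
    (i : Fin k) : (S.filter (fun p => p.1 = i)).card ≤ 1 := by
  rw [Finset.card_le_one]
  intro a ha b hb
  rw [Finset.mem_filter] at ha hb
  by_contra hab
  exact h ha.1 hb.1 (copiesK2_adj.2 ⟨hab, ha.2.trans hb.2.symm⟩)

lemma indep_card_le_k {k : ℕ} {S : Finset (Fin k × Fin 2)} (h : isIndep (copiesK2 k) S) :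
    S.card ≤ k := by
  have hS : S = Finset.univ.biUnion (fun i : Fin k => S.filter (fun p => p.1 = i)) := by
    ext p
    simp only [Finset.mem_biUnion, Finset.mem_univ, true_and, Finset.mem_filter]
    exact ⟨fun hp => ⟨p.1, hp, rfl⟩, fun ⟨i, hp, _⟩ => hp⟩
  have hdisj : ∀ i ∈ (Finset.univ : Finset (Fin k)), ∀ j ∈ Finset.univ, i ≠ j →
      Disjoint (S.filter (fun p => p.1 = i)) (S.filter (fun p => p.1 = j)) := by
    intro i _ j _ hij
    rw [Finset.disjoint_left]
    intro p hp hp'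
    rw [Finset.mem_filter] at hp hp'
    exact hij (hp.2 ▸ hp'.2 ▸ rfl)
  calc S.card = ∑ i : Fin k, (S.filter (fun p => p.1 = i)).card := by
        conv_lhs => rw [hS]
        exact Finset.card_biUnion hdisj
    _ ≤ ∑ _i : Fin k, 1 := Finset.sum_le_sum (fun i _ => fib_card_le h i)
    _ = k := by simp

lemma indepNum_copiesK2 (k : ℕ) : _root_.indepNum (copiesK2 k) = k := by
  refine le_antisymm ?_ ?_
  · refine csSup_le ⟨0, ∅, fun a ha => absurd ha (by simp), Finset.card_empty⟩ ?_
    rintro n ⟨S, hS, rfl⟩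
    exact indep_card_le_k hS
  · have hInd : isIndep (copiesK2 k) (Finset.univ.image (fun i : Fin k => (i, (0 : Fin 2)))) := by
      intro a ha b hb hadj
      simp only [Finset.mem_image, Finset.mem_univ, true_and] at ha hb
      obtain ⟨i, rfl⟩ := ha
      obtain ⟨j, rfl⟩ := hb
      obtain ⟨hne, h1⟩ := copiesK2_adj.1 hadj
      simp only at h1
      exact hne (by rw [h1])
    have hcard : (Finset.univ.image (fun i : Fin k => (i, (0 : Fin 2)))).card = k := by
      rw [Finset.card_image_of_injective _ (fun i j (h : _ = _) => congrArg Prod.fst h),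
        Finset.card_univ, Fintype.card_fin]
    have := indep_card_le hInd
    rwa [hcard] at this

lemma fin2 (j : Fin 2) : j = 0 ∨ j = 1 := by fin_cases j <;> simp

lemma mis_copiesK2_eq (k : ℕ) :
    {S : Finset (Fin k × Fin 2) | isMaxIndep (copiesK2 k) S} =
      (fun f : Fin k → Fin 2 => Finset.univ.image (fun i => (i, f i))) '' Set.univ := by
  ext S
  simp only [Set.mem_setOf_eq, Set.mem_image, Set.mem_univ, true_and]
  constructor
  · rintro ⟨hInd, hcard⟩
    rw [indepNum_copiesK2] at hcard
    have hfib : ∀ i : Fin k, (S.filter (fun p => p.1 = i)).card = 1 := by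
      have hS : S = Finset.univ.biUnion (fun i : Fin k => S.filter (fun p => p.1 = i)) := by
        ext p
        simp only [Finset.mem_biUnion, Finset.mem_univ, true_and, Finset.mem_filter]
        exact ⟨fun hp => ⟨p.1, hp, rfl⟩, fun ⟨i, hp, _⟩ => hp⟩
      have hdisj : ∀ i ∈ (Finset.univ : Finset (Fin k)), ∀ j ∈ Finset.univ, i ≠ j →
          Disjoint (S.filter (fun p => p.1 = i)) (S.filter (fun p => p.1 = j)) := by
        intro i _ j _ hij
        rw [Finset.disjoint_left]
        intro p hp hp'
        rw [Finset.mem_filter] at hp hp'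
        exact hij (hp.2 ▸ hp'.2 ▸ rfl)
      have hsum : ∑ i : Fin k, (S.filter (fun p => p.1 = i)).card = S.card := by
        conv_rhs => rw [hS]
        exact (Finset.card_biUnion hdisj).symm
      have := all_eq_one (s := (Finset.univ : Finset (Fin k))) (fun i _ => fib_card_le hInd i)
        (by rw [hsum, hcard, Finset.card_univ, Fintype.card_fin])
      exact fun i => this i (Finset.mem_univ i)
    refine ⟨fun i => if (i, (0 : Fin 2)) ∈ S then 0 else 1, ?_⟩
    ext ⟨i, j⟩
    simp only [Finset.mem_image, Finset.mem_univ, true_and, Prod.mk.injEq]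
    have hone := hfib i
    rw [Finset.card_eq_one] at hone
    obtain ⟨⟨i', j'⟩, hpt⟩ := hone
    have hmem : ∀ p : Fin k × Fin 2, (p ∈ S ∧ p.1 = i) ↔ p = (i', j') := by
      intro p
      constructor
      · intro h
        have : p ∈ S.filter (fun q => q.1 = i) := Finset.mem_filter.2 h
        rwa [hpt, Finset.mem_singleton] at this
      · rintro rfl
        have : (i', j') ∈ S.filter (fun q => q.1 = i) := by
          rw [hpt]; exact Finset.mem_singleton_self _
        exact Finset.mem_filter.1 this
    have hi' : i' = i := ((hmem (i', j')).2 rfl).2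
    subst hi'
    have hj'S : (i', j') ∈ S := ((hmem (i', j')).2 rfl).1
    have hval : (if (i', (0 : Fin 2)) ∈ S then (0 : Fin 2) else 1) = j' := by
      rcases fin2 j' with rfl | rfl
      · rw [if_pos hj'S]
      · rw [if_neg]
        intro h0
        have := (hmem (i', 0)).1 ⟨h0, rfl⟩
        simp at this
    constructor
    · rintro ⟨a, rfl, hv⟩
      rw [hval] at hv
      rw [← hv]
      exact hj'S
    · intro hS'
      have hj : j = j' := by
        have := (hmem (i', j)).1 ⟨hS', rfl⟩
        simpa using this
      exact ⟨i', rfl, by rw [hval, hj]⟩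
  · rintro ⟨f, rfl⟩
    constructor
    · intro a ha b hb hadj
      simp only [Finset.mem_image, Finset.mem_univ, true_and] at ha hb
      obtain ⟨i, rfl⟩ := ha
      obtain ⟨j, rfl⟩ := hb
      obtain ⟨hne, h1⟩ := copiesK2_adj.1 hadj
      simp only at h1
      subst h1
      exact hne rfl
    · rw [indepNum_copiesK2,
        Finset.card_image_of_injective _ (fun i j (h : _ = _) => congrArg Prod.fst h),
        Finset.card_univ, Fintype.card_fin]

lemma ncard_mis_copiesK2 (k : ℕ) :
    {S : Finset (Fin k × Fin 2) | isMaxIndep (copiesK2 k) S}.ncard = 2 ^ k := by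
  rw [mis_copiesK2_eq k]
  have hinj : Function.Injective
      (fun f : Fin k → Fin 2 => Finset.univ.image (fun i => (i, f i))) := by
    intro f g h
    funext i
    have h' : Finset.univ.image (fun i => (i, f i)) = Finset.univ.image (fun i => (i, g i)) := h
    have hm : ((i, f i) : Fin k × Fin 2) ∈ Finset.univ.image (fun i => (i, g i)) := by
      rw [← h']
      exact Finset.mem_image_of_mem _ (Finset.mem_univ i)
    simp only [Finset.mem_image, Finset.mem_univ, true_and, Prod.mk.injEq] at hm
    obtain ⟨a, rfl, hv⟩ := hm
    exact hv.symm
  rw [Set.ncard_image_of_injective _ hinj, Set.ncard_univ, Nat.card_eq_fintype_card]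
  simp

section Transfer
variable {W : Type*} [Fintype W] [DecidableEq W]

lemma indep_image {G : SimpleGraph V} {H : SimpleGraph W} (φ : G ≃g H) {S : Finset V}
    (h : isIndep G S) : isIndep H (S.image φ) := by
  intro a ha b hb hadj
  obtain ⟨u, hu, rfl⟩ := Finset.mem_image.1 ha
  obtain ⟨v, hv, rfl⟩ := Finset.mem_image.1 hb
  exact h hu hv (φ.map_adj_iff.1 hadj)

lemma indepNum_le_iso {G : SimpleGraph V} {H : SimpleGraph W} (φ : G ≃g H) :
    _root_.indepNum G ≤ _root_.indepNum H := by
  obtain ⟨S, hS, hcard⟩ := exists_max_indep G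
  have := indep_card_le (indep_image φ hS)
  rwa [Finset.card_image_of_injective _ φ.injective, hcard] at this

lemma indepNum_iso {G : SimpleGraph V} {H : SimpleGraph W} (φ : G ≃g H) :
    _root_.indepNum G = _root_.indepNum H :=
  le_antisymm (indepNum_le_iso φ) (indepNum_le_iso φ.symm)

lemma image_symm_image {G : SimpleGraph V} {H : SimpleGraph W} (φ : G ≃g H) (S : Finset V) :
    (S.image φ).image φ.symm = S := by
  rw [Finset.image_image]
  have : (⇑φ.symm ∘ ⇑φ) = id := by
    funext x
    simp
  rw [this, Finset.image_id]

lemma isMaxIndep_iso {G : SimpleGraph V} {H : SimpleGraph W} (φ : G ≃g H) {S : Finset V}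
    (h : isMaxIndep G S) : isMaxIndep H (S.image φ) := by
  refine ⟨indep_image φ h.1, ?_⟩
  rw [Finset.card_image_of_injective _ φ.injective, h.2, indepNum_iso φ]

lemma mis_ncard_iso {G : SimpleGraph V} {H : SimpleGraph W} (φ : G ≃g H) :
    {S : Finset V | isMaxIndep G S}.ncard = {T : Finset W | isMaxIndep H T}.ncard := by
  have hset : {T : Finset W | isMaxIndep H T} =
      (fun S : Finset V => S.image φ) '' {S : Finset V | isMaxIndep G S} := by
    ext T
    simp only [Set.mem_setOf_eq, Set.mem_image]
    constructor
    · intro hT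
      refine ⟨T.image φ.symm, isMaxIndep_iso φ.symm hT, ?_⟩
      exact image_symm_image φ.symm T
    · rintro ⟨S, hS, rfl⟩
      exact isMaxIndep_iso φ hS
  rw [hset, Set.ncard_image_of_injective _ (Finset.image_injective φ.injective)]

end Transfer

lemma build_iso {G : SimpleGraph V} {M : Finset (Sym2 V)} {k : ℕ}
    (hM : isMatchingF G M) (hMcard : M.card = k)
    (hcover : ∀ v : V, ∃ e ∈ M, v ∈ e)
    (hedge : ∀ x y : V, G.Adj x y → s(x, y) ∈ M) :
    Nonempty (G ≃g copiesK2 k) := by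
  classical
  choose cov covMem covSelf using hcover
  have covEq : ∀ v (e : Sym2 V), e ∈ M → v ∈ e → cov v = e := by
    intro v e he hv
    by_contra hne
    exact hM.2 (cov v) (covMem v) e he hne v (covSelf v) hv
  let ι : ↥M ≃ Fin k := M.equivFinOfCardEq hMcard
  let toW : V → Fin k × Fin 2 :=
    fun v => (ι ⟨cov v, covMem v⟩, if v = (cov v).out.1 then 0 else 1)
  let fromW : Fin k × Fin 2 → V :=
    fun p => if p.2 = 0 then ((ι.symm p.1 : Sym2 V)).out.1 else ((ι.symm p.1 : Sym2 V)).out.2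
  have houtne : ∀ e ∈ M, e.out.1 ≠ e.out.2 := fun e he => out_ne (hM.1 e he)
  have hleft : ∀ v, fromW (toW v) = v := by
    intro v
    simp only [toW, fromW, Equiv.symm_apply_apply]
    by_cases h1 : v = (cov v).out.1
    · rw [if_pos h1, if_pos rfl]
      exact h1.symm
    · have hv2 : v = (cov v).out.2 := by
        have := covSelf v
        rw [← mk_out' (cov v), Sym2.mem_iff] at this
        tauto
      simp only [if_neg h1]
      norm_num
      exact hv2.symm
  have hright : ∀ p, toW (fromW p) = p := by
    intro p
    obtain ⟨i, j⟩ := p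
    have heM : (ι.symm i : Sym2 V) ∈ M := (ι.symm i).2
    have hne := houtne _ heM
    rcases fin2 j with rfl | rfl
    · have hv : fromW (i, 0) = (ι.symm i : Sym2 V).out.1 := by simp [fromW]
      have hcov : cov ((ι.symm i : Sym2 V).out.1) = (ι.symm i : Sym2 V) :=
        covEq _ _ heM (Sym2.out_fst_mem _)
      simp only [toW, hv, hcov, Prod.mk.injEq]
      exact ⟨Equiv.apply_symm_apply ι i, by simp⟩
    · have hv : fromW (i, 1) = (ι.symm i : Sym2 V).out.2 := by
        simp only [fromW]
        norm_num
      have hcov : cov ((ι.symm i : Sym2 V).out.2) = (ι.symm i : Sym2 V) :=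
        covEq _ _ heM (Sym2.out_snd_mem _)
      simp only [toW, hv, hcov, Prod.mk.injEq]
      exact ⟨Equiv.apply_symm_apply ι i, by rw [if_neg hne.symm]⟩
  let eqv : V ≃ Fin k × Fin 2 := ⟨toW, fromW, hleft, hright⟩
  refine ⟨⟨eqv, ?_⟩⟩
  intro x y
  show (copiesK2 k).Adj (toW x) (toW y) ↔ G.Adj x y
  rw [copiesK2_adj]
  constructor
  · rintro ⟨hpq, h1⟩
    have hxy : x ≠ y := by
      rintro rfl
      exact hpq rfl
    have hcc : cov x = cov y := by
      have : (⟨cov x, covMem x⟩ : ↥M) = ⟨cov y, covMem y⟩ := ι.injective h1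
      exact Subtype.ext_iff.1 this
    have hxe : x ∈ cov y := hcc ▸ covSelf x
    have he : cov y = s(x, y) := (Sym2.mem_and_mem_iff hxy).1 ⟨hxe, covSelf y⟩
    have := hM.1 _ (covMem y)
    rw [he, SimpleGraph.mem_edgeSet] at this
    exact this
  · intro hadj
    have hxy : x ≠ y := hadj.ne
    have hmem : s(x, y) ∈ M := hedge x y hadj
    have hcx : cov x = s(x, y) := covEq _ _ hmem (Sym2.mem_mk_left x y)
    have hcy : cov y = s(x, y) := covEq _ _ hmem (Sym2.mem_mk_right x y)
    refine ⟨fun h => hxy ?_, ?_⟩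
    · have := congrArg fromW h
      rwa [hleft, hleft] at this
    · show ι ⟨cov x, covMem x⟩ = ι ⟨cov y, covMem y⟩
      congr 1
      exact Subtype.ext (hcx.trans hcy.symm)

lemma eq_to_iso {G : SimpleGraph V} (hKE : _root_.indepNum G + matchNum G = Fintype.card V)
    (h : {S : Finset V | isMaxIndep G S}.ncard = 2 ^ _root_.indepNum G) :
    Nonempty (G ≃g copiesK2 (_root_.indepNum G)) := by
  classical
  obtain ⟨M, hM, hMc⟩ := exists_max_match G
  have hmu : matchNum G ≤ _root_.indepNum G := mu_le_alpha hKE hM hMc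
  have hle := mis_ncard_le hKE hM hMc
  have hpow : 2 ^ _root_.indepNum G ≤ 2 ^ M.card := h ▸ hle
  have hMeq : M.card = _root_.indepNum G :=
    le_antisymm (hMc ▸ hmu) ((Nat.pow_le_pow_iff_right (by norm_num : 1 < 2)).1 hpow)
  have h2mu := two_mu_le hM
  have hC : M.biUnion pairF = Finset.univ := by
    refine Finset.eq_univ_of_card _ ?_
    rw [card_covered hM]
    omega
  have hcover : ∀ v : V, ∃ e ∈ M, v ∈ e := by
    intro v
    have : v ∈ M.biUnion pairF := hC ▸ Finset.mem_univ v
    obtain ⟨e, he, hv⟩ := Finset.mem_biUnion.1 this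
    exact ⟨e, he, mem_pairF.1 hv⟩
  have hset : encM M '' {S : Finset V | isMaxIndep G S} = (M.powerset : Set (Finset (Sym2 V))) := by
    refine Set.eq_of_subset_of_ncard_le ?_ ?_ (M.powerset.finite_toSet)
    · rintro F ⟨S, hS, rfl⟩
      rw [Finset.mem_coe, Finset.mem_powerset]
      exact Finset.filter_subset _ _
    · rw [Set.ncard_image_of_injOn (enc_injOn hKE hM hMc), h, Set.ncard_coe_finset,
        Finset.card_powerset, hMeq]
  have hedge : ∀ x y : V, G.Adj x y → s(x, y) ∈ M := by
    intro x y hadj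
    obtain ⟨ex, hex, hxex⟩ := hcover x
    obtain ⟨ey, hey, hyey⟩ := hcover y
    by_cases hef : ex = ey
    · subst hef
      rw [← (Sym2.mem_and_mem_iff hadj.ne).1 ⟨hxex, hyey⟩]
      exact hex
    · exfalso
      set F := M.filter (fun g => (g = ex → x = ex.out.1) ∧ (g = ey → y = ey.out.1)) with hF
      have hFmem : F ∈ (M.powerset : Set (Finset (Sym2 V))) := by
        rw [Finset.mem_coe, Finset.mem_powerset]
        exact Finset.filter_subset _ _
      rw [← hset] at hFmem
      obtain ⟨S, hS, hSF⟩ := hFmem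
      have hkey : ∀ (v : V) (e : Sym2 V), e ∈ M → v ∈ e → (e ∈ F ↔ v = e.out.1) → v ∈ S := by
        intro v e he hve hiff
        have hne : e.out.1 ≠ e.out.2 := out_ne (hM.1 e he)
        have hone := inter_pair_one hne ((mis_struct hKE hM hMc hS).2 e he)
        have henc : e ∈ F ↔ e.out.1 ∈ S := by
          rw [← hSF]
          simp only [encM, Finset.mem_filter, he, true_and]
        rw [← mk_out' e, Sym2.mem_iff] at hve
        rcases hve with hv1 | hv2
        · rw [hv1]
          exact henc.1 (hiff.2 hv1)
        · have hvne : v ≠ e.out.1 := by rw [hv2]; exact hne.symm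
          have : e ∉ F := fun hFe => hvne (hiff.1 hFe)
          have h1 : e.out.1 ∉ S := fun hs => this (henc.2 hs)
          rw [hv2]
          tauto
      have hxS : x ∈ S := by
        refine hkey x ex hex hxex ?_
        simp only [hF, Finset.mem_filter, hex, true_and]
        have h1 : ex = ex := rfl
        tauto
      have hyS : y ∈ S := by
        refine hkey y ey hey hyey ?_
        simp only [hF, Finset.mem_filter, hey, true_and]
        have h1 : ey = ey := rfl
        have h2 : ¬ ey = ex := fun hc => hef hc.symm
        tauto
      exact hS.1 hxS hyS hadj
  exact build_iso hM hMeq hcover hedge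

lemma iso_to_eq {G : SimpleGraph V} (φ : G ≃g copiesK2 (_root_.indepNum G)) :
    {S : Finset V | isMaxIndep G S}.ncard = 2 ^ _root_.indepNum G := by
  rw [mis_ncard_iso φ, ncard_mis_copiesK2]


/-- A König–Egerváry graph has at most `2^{α(G)}` maximum independent sets, with
equality iff `G` is the disjoint union of `α(G)` copies of `K₂`. -/
theorem stmt14 (G : SimpleGraph V)
    (hKE : _root_.indepNum G + matchNum G = Fintype.card V) :
    {S : Finset V | isMaxIndep G S}.ncard ≤ 2 ^ _root_.indepNum G ∧
      ({S : Finset V | isMaxIndep G S}.ncard = 2 ^ _root_.indepNum G ↔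
        Nonempty (G ≃g copiesK2 (_root_.indepNum G))) := by
  obtain ⟨M, hM, hMc⟩ := exists_max_match G
  have hmu : matchNum G ≤ _root_.indepNum G := mu_le_alpha hKE hM hMc
  have hle := mis_ncard_le hKE hM hMc
  have hle2 : {S : Finset V | isMaxIndep G S}.ncard ≤ 2 ^ _root_.indepNum G :=
    le_trans hle (Nat.pow_le_pow_right (by norm_num) (hMc ▸ hmu))
  exact ⟨hle2, fun h => eq_to_iso hKE h, fun ⟨φ⟩ => iso_to_eq φ⟩
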